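/- Let n ≥ 0, let σ_1,…,σ_{n+1} ∈ Σ_{r^m}* be words and L_1,…,L_n ⊆ Σ_{r^m}* be languages, and let L = σ_{n+1}·L_n*·σ_n⋯L_1*·σ_1 (the concatenation, read left to right, of σ_{n+1}, the Kleene star of L_n, σ_n, …, the Kleene star of L_1, and σ_1). Then cl(conv(ξ(L))) = cl(conv( ξ({σ_{n+1}⋯σ_1}) ∪ ⋃_{i=1}^n Γ_{σ_i⋯σ_1}^{-1}( cl(conv(ξ(L_i))) ) )), where σ_j⋯σ_1 denotes the concatenated word σ_j·σ_{j−1}⋯σ_1 and ξ({σ_{n+1}⋯σ_1}) is the singleton {ξ(σ_{n+1}⋯σ_1)} if the word σ_{n+1}⋯σ_1 is nonempty and ∅ otherwise. -/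

import Mathlib

/-- The alphabet `Σ_{r^m}` of digit vectors. -/
abbrev Alpha (r m : ℕ) := Fin m → Fin r
abbrev Word (r m : ℕ) := List (Alpha r m)

/-- `ρ(b₁⋯bₙ) = Σᵢ r^(i-1)·bᵢ` (least significant digit first), viewed in `ℝ^m`. -/
noncomputable def rho (r m : ℕ) : Word r m → (Fin m → ℝ)
  | [] => 0
  | b :: w => (fun j => (b j : ℝ)) + (r : ℝ) • rho r m w

/-- `Γ_σ(x) = r^|σ|·x + ρ(σ)`. -/
noncomputable def Gam (r m : ℕ) (σ : Word r m) (x : Fin m → ℝ) : Fin m → ℝ :=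
  (r : ℝ) ^ σ.length • x + rho r m σ

/-- The inverse bijection `Γ_σ⁻¹(y) = (y - ρ(σ))/r^|σ|`. -/
noncomputable def GamInv (r m : ℕ) (σ : Word r m) (y : Fin m → ℝ) : Fin m → ℝ :=
  ((r : ℝ) ^ σ.length)⁻¹ • (y - rho r m σ)

/-- `ξ(σ) = ρ(σ)/(1 - r^|σ|)` (meaningful for nonempty `σ`). -/
noncomputable def xi (r m : ℕ) (σ : Word r m) : Fin m → ℝ :=
  (1 - (r : ℝ) ^ σ.length)⁻¹ • rho r m σ

/-- `ρ(L) = {ρ(σ) : σ ∈ L}`. -/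
def rhoSet (r m : ℕ) (L : Set (Word r m)) : Set (Fin m → ℝ) :=
  {x | ∃ σ ∈ L, x = rho r m σ}

/-- `ξ(L) = {ξ(σ) : σ ∈ L, σ ≠ ε}`. -/
def xiSet (r m : ℕ) (L : Set (Word r m)) : Set (Fin m → ℝ) :=
  {x | ∃ σ ∈ L, σ ≠ [] ∧ x = xi r m σ}

/-- Kleene star of a language. -/
def kstar' {α : Type*} (L : Set (List α)) : Set (List α) :=
  {w | ∃ ws : List (List α), (∀ u ∈ ws, u ∈ L) ∧ w = ws.flatten}

/-- Concatenation of two languages. -/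
def catL {α : Type*} (A B : Set (List α)) : Set (List α) :=
  {w | ∃ a ∈ A, ∃ b ∈ B, w = a ++ b}

/-- `chainLang σ Ls n = σ_{n+1}·(L_n)*·σ_n ⋯ (L_1)*·σ_1`. -/
def chainLang {α : Type*} (σ : ℕ → List α) (Ls : ℕ → Set (List α)) : ℕ → Set (List α)
  | 0 => {σ 1}
  | n + 1 => catL {σ (n + 2)} (catL (kstar' (Ls (n + 1))) (chainLang σ Ls n))

/-- `catDown σ hi lo = σ_hi·σ_{hi-1}⋯σ_lo` (empty if `lo > hi`). -/
def catDown {α : Type*} (σ : ℕ → List α) (hi lo : ℕ) : List α :=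
  ((List.range (hi + 1 - lo)).map fun j => σ (hi - j)).flatten

/-- `catUp σ k = σ_1·σ_2⋯σ_k`. -/
def catUp {α : Type*} (σ : ℕ → List α) (k : ℕ) : List α :=
  ((List.range k).map fun j => σ (j + 1)).flatten

/-- `σ^k`, the `k`-fold concatenation of `σ`. -/
def repK {α : Type*} (σ : List α) (k : ℕ) : List α := (List.replicate k σ).flatten

/-- `ℝ₋·X = {t·x : t ≤ 0, x ∈ X}`. -/
def negSmul {m : ℕ} (X : Set (Fin m → ℝ)) : Set (Fin m → ℝ) :=
  {y | ∃ t : ℝ, t ≤ 0 ∧ ∃ x ∈ X, y = t • x}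

/-- The cone `C(R)` generated by a finite set of rays. -/
def coneOf {m : ℕ} (R : Finset ((Fin m → ℝ) × ℝ)) : Set ((Fin m → ℝ) × ℝ) :=
  {y | ∃ t : ((Fin m → ℝ) × ℝ) → ℝ, (∀ p, 0 ≤ t p) ∧ y = ∑ p ∈ R, t p • p}

/-- The polyhedral convex set `P(R) = {x : (x,1) ∈ C(R)}`. -/
def polyOf {m : ℕ} (R : Finset ((Fin m → ℝ) × ℝ)) : Set (Fin m → ℝ) :=
  {x | (x, (1 : ℝ)) ∈ coneOf R}

section A
variable {r m : ℕ}

lemma one_lt_powR (hr : 2 ≤ r) {k : ℕ} (hk : k ≠ 0) : 1 < (r:ℝ) ^ k := by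
  apply one_lt_pow₀ _ hk
  exact_mod_cast lt_of_lt_of_le one_lt_two (by exact_mod_cast hr)

lemma powR_pos (hr : 2 ≤ r) (k : ℕ) : 0 < (r:ℝ) ^ k := by
  positivity

lemma one_sub_pow_ne (hr : 2 ≤ r) {k : ℕ} (hk : k ≠ 0) : 1 - (r:ℝ) ^ k ≠ 0 :=
  sub_ne_zero.mpr (ne_of_lt (one_lt_powR hr hk))

lemma rho_append (a b : Word r m) :
    rho r m (a ++ b) = rho r m a + (r:ℝ) ^ a.length • rho r m b := by
  induction a with
  | nil => simp [rho]
  | cons x t ih =>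
      simp only [List.cons_append, rho, List.append_eq, ih, List.length_cons]
      funext i
      simp only [pow_succ, Pi.add_apply, Pi.smul_apply, smul_eq_mul]
      ring

lemma Gam_nil (x : Fin m → ℝ) : Gam r m [] x = x := by
  simp [Gam, rho]

lemma Gam_append (a b : Word r m) (x : Fin m → ℝ) :
    Gam r m (a ++ b) x = Gam r m a (Gam r m b x) := by
  simp only [Gam, rho_append, List.length_append, pow_add, smul_add, smul_smul]
  module

lemma GamInv_Gam (hr : 2 ≤ r) (σ : Word r m) (x : Fin m → ℝ) :
    GamInv r m σ (Gam r m σ x) = x := by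
  have h : ((r:ℝ) ^ σ.length) ≠ 0 := ne_of_gt (powR_pos hr _)
  simp [GamInv, Gam, smul_smul, inv_mul_cancel₀ h]

lemma Gam_GamInv (hr : 2 ≤ r) (σ : Word r m) (y : Fin m → ℝ) :
    Gam r m σ (GamInv r m σ y) = y := by
  have h : ((r:ℝ) ^ σ.length) ≠ 0 := ne_of_gt (powR_pos hr _)
  simp [GamInv, Gam, smul_sub, smul_smul, mul_inv_cancel₀ h]

lemma Gam_preimage_eq (hr : 2 ≤ r) (σ : Word r m) (X : Set (Fin m → ℝ)) :
    Gam r m σ ⁻¹' X = GamInv r m σ '' X := by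
  ext y
  constructor
  · intro h; exact ⟨Gam r m σ y, h, GamInv_Gam hr σ y⟩
  · rintro ⟨x, hx, rfl⟩; simpa [Set.mem_preimage, Gam_GamInv hr] using hx

lemma Gam_xi_rot (hr : 2 ≤ r) (a b : Word r m) :
    Gam r m b (xi r m (a ++ b)) = xi r m (b ++ a) := by
  rcases Nat.eq_zero_or_pos (a.length + b.length) with h | h
  · have ha : a = [] := List.eq_nil_of_length_eq_zero (by omega)
    have hb : b = [] := List.eq_nil_of_length_eq_zero (by omega)
    subst ha; subst hb
    simpa using Gam_nil (xi r m ([] : Word r m))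
  · have hL : 1 - (r:ℝ) ^ a.length * (r:ℝ) ^ b.length ≠ 0 := by
      rw [← pow_add]; exact one_sub_pow_ne hr (by omega)
    have hL2 : 1 - (r:ℝ) ^ b.length * (r:ℝ) ^ a.length ≠ 0 := by
      rw [mul_comm]; exact hL
    funext i
    simp only [Gam, xi, rho_append, List.length_append, Pi.add_apply, Pi.smul_apply,
      smul_eq_mul, pow_add]
    field_simp
    ring

end A

section B
variable {r m : ℕ}

open Filter Topology

lemma xi_append_eq_gaminv (hr : 2 ≤ r) (a b : Word r m) :
    xi r m (a ++ b) = GamInv r m b (xi r m (b ++ a)) := by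
  rw [← Gam_xi_rot hr a b, GamInv_Gam hr]

lemma xi_append_eq (hr : 2 ≤ r) {a b : Word r m} (ha : a ≠ []) (hb : b ≠ []) :
    xi r m (a ++ b) = xi r m b +
      (((r:ℝ) ^ a.length - 1) / ((r:ℝ) ^ a.length * (r:ℝ) ^ b.length - 1)) •
        (xi r m a - xi r m b) := by
  have hA : 1 - (r:ℝ) ^ a.length ≠ 0 := one_sub_pow_ne hr (by simpa using ha)
  have hB : 1 - (r:ℝ) ^ b.length ≠ 0 := one_sub_pow_ne hr (by simpa using hb)
  have hAB' : 1 - (r:ℝ) ^ a.length * (r:ℝ) ^ b.length ≠ 0 := by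
    rw [← pow_add]
    refine one_sub_pow_ne hr ?_
    simp only [ne_eq, Nat.add_eq_zero, List.length_eq_zero_iff]
    tauto
  have hAB : (r:ℝ) ^ a.length * (r:ℝ) ^ b.length - 1 ≠ 0 := by
    intro h; apply hAB'; linarith [sub_eq_zero.mp h]
  funext i
  simp only [xi, rho_append, List.length_append, Pi.add_apply, Pi.smul_apply, Pi.sub_apply,
    smul_eq_mul, pow_add]
  field_simp
  ring

lemma coeff_nonneg (hr : 2 ≤ r) {a b : Word r m} (ha : a ≠ []) (hb : b ≠ []) :
    0 ≤ ((r:ℝ) ^ a.length - 1) / ((r:ℝ) ^ a.length * (r:ℝ) ^ b.length - 1) ∧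
    ((r:ℝ) ^ a.length - 1) / ((r:ℝ) ^ a.length * (r:ℝ) ^ b.length - 1) ≤ 1 := by
  have hA : 1 < (r:ℝ) ^ a.length := one_lt_powR hr (by simpa using ha)
  have hB : 1 < (r:ℝ) ^ b.length := one_lt_powR hr (by simpa using hb)
  have hAB : 1 < (r:ℝ) ^ a.length * (r:ℝ) ^ b.length := by nlinarith
  constructor
  · apply div_nonneg <;> linarith
  · rw [div_le_one (by linarith)]
    nlinarith

lemma xi_append_mem_convex (hr : 2 ≤ r) {C : Set (Fin m → ℝ)} (hC : Convex ℝ C)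
    {a b : Word r m} (ha : a ≠ []) (hb : b ≠ []) (hxa : xi r m a ∈ C) (hxb : xi r m b ∈ C) :
    xi r m (a ++ b) ∈ C := by
  obtain ⟨h0, h1⟩ := coeff_nonneg hr ha hb
  set t := ((r:ℝ) ^ a.length - 1) / ((r:ℝ) ^ a.length * (r:ℝ) ^ b.length - 1) with ht
  have hm : t • xi r m a + (1 - t) • xi r m b ∈ C := hC hxa hxb h0 (by linarith) (by ring)
  rw [xi_append_eq hr ha hb, ← ht]
  convert hm using 1
  module

lemma eq_xi_of_fixed (hr : 2 ≤ r) {σ : Word r m} (hσ : σ ≠ []) {x : Fin m → ℝ}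
    (hx : Gam r m σ x = x) : x = xi r m σ := by
  have hA : 1 - (r:ℝ) ^ σ.length ≠ 0 := one_sub_pow_ne hr (by simpa using hσ)
  funext i
  have := congrFun hx i
  simp only [Gam, Pi.add_apply, Pi.smul_apply, smul_eq_mul] at this
  simp only [xi, Pi.smul_apply, smul_eq_mul]
  field_simp
  linarith [this]

lemma repK_succ (u : Word r m) (k : ℕ) : repK u (k + 1) = u ++ repK u k := by
  simp [repK, List.replicate_succ]

lemma repK_succ' (u : Word r m) (k : ℕ) : repK u (k + 1) = repK u k ++ u := by
  simp [repK, List.replicate_succ']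

lemma repK_ne_nil {u : Word r m} (hu : u ≠ []) (k : ℕ) : repK u (k + 1) ≠ [] := by
  simp [repK_succ u k, hu]

lemma xi_repK (hr : 2 ≤ r) {u : Word r m} (hu : u ≠ []) (k : ℕ) :
    xi r m (repK u (k + 1)) = xi r m u := by
  cases k with
  | zero => simp [repK]
  | succ k =>
      symm
      apply (eq_xi_of_fixed hr hu _).symm
      have h := Gam_xi_rot hr (repK u (k+1)) u
      rw [← repK_succ', ← repK_succ] at h
      exact h

section C
variable {r m : ℕ}
open Filter Topology

lemma repK_length (u : Word r m) (k : ℕ) : (repK u k).length = k * u.length := by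
  simp [repK]

lemma xi_tendsto (hr : 2 ≤ r) {u : Word r m} (hu : u ≠ []) (p : Word r m) :
    Tendsto (fun k => xi r m (p ++ repK u (k + 1))) atTop (nhds (xi r m u)) := by
  rcases eq_or_ne p [] with hp | hp
  · simp only [hp, List.nil_append]
    simp only [xi_repK hr hu]
    exact tendsto_const_nhds
  · have heq : ∀ k, xi r m (p ++ repK u (k + 1)) = xi r m u +
        (((r:ℝ) ^ p.length - 1) / ((r:ℝ) ^ p.length * ((r:ℝ) ^ u.length) ^ (k+1) - 1)) •
          (xi r m p - xi r m u) := by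
      intro k
      rw [xi_append_eq hr hp (repK_ne_nil hu k), xi_repK hr hu, repK_length,
        ← pow_mul, mul_comm u.length (k+1)]
    simp only [heq]
    have hα : Tendsto (fun k : ℕ =>
        ((r:ℝ) ^ p.length - 1) / ((r:ℝ) ^ p.length * ((r:ℝ) ^ u.length) ^ (k+1) - 1))
        atTop (nhds 0) := by
      apply Tendsto.div_atTop tendsto_const_nhds
      have h1 : Tendsto (fun k : ℕ => ((r:ℝ) ^ u.length) ^ k) atTop atTop :=
        tendsto_pow_atTop_atTop_of_one_lt (one_lt_powR hr (by simpa using hu))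
      have h2 : Tendsto (fun k : ℕ => ((r:ℝ) ^ u.length) ^ (k+1)) atTop atTop :=
        h1.comp (tendsto_add_atTop_nat 1)
      have h3 : Tendsto (fun k : ℕ => (r:ℝ) ^ p.length * ((r:ℝ) ^ u.length) ^ (k+1))
          atTop atTop := h2.const_mul_atTop (powR_pos hr _)
      simpa [sub_eq_add_neg] using tendsto_atTop_add_const_right atTop (-1) h3
    have h4 := Tendsto.add (tendsto_const_nhds (x := xi r m u) (f := (atTop : Filter ℕ)))
      (hα.smul_const (xi r m p - xi r m u))
    simpa using h4

noncomputable def affHomeo (c : ℝ) (hc : c ≠ 0) (d : Fin m → ℝ) :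
    Homeomorph (Fin m → ℝ) (Fin m → ℝ) where
  toFun x := c • x + d
  invFun y := c⁻¹ • (y - d)
  left_inv x := by simp [smul_smul, inv_mul_cancel₀ hc]
  right_inv y := by simp [smul_smul, mul_inv_cancel₀ hc]
  continuous_toFun := by
    exact (continuous_id.const_smul c).add continuous_const
  continuous_invFun := by
    exact ((continuous_id (X := Fin m → ℝ)).sub continuous_const).const_smul c⁻¹

noncomputable def affMap (c : ℝ) (d : Fin m → ℝ) :
    (Fin m → ℝ) →ᵃ[ℝ] (Fin m → ℝ) where
  toFun x := c • x + d
  linear := c • LinearMap.id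
  map_vadd' p v := by
    simp [smul_add]
    abel

lemma affine_image_cchull (c : ℝ) (hc : c ≠ 0) (d : Fin m → ℝ) (X : Set (Fin m → ℝ)) :
    (fun x => c • x + d) '' closure (convexHull ℝ X) =
      closure (convexHull ℝ ((fun x => c • x + d) '' X)) := by
  have h1 := (affHomeo c hc d).image_closure (convexHull ℝ X)
  have h2 := (affMap c d (m := m)).image_convexHull X
  have e1 : ⇑(affHomeo c hc d) = fun x => c • x + d := rfl
  have e2 : ⇑(affMap c d (m := m)) = fun x => c • x + d := rfl
  rw [e1] at h1
  rw [e2] at h2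
  rw [h1, h2]

lemma Gam_image_cchull (hr : 2 ≤ r) (σ : Word r m) (X : Set (Fin m → ℝ)) :
    Gam r m σ '' closure (convexHull ℝ X) = closure (convexHull ℝ (Gam r m σ '' X)) := by
  have : Gam r m σ = fun x => ((r:ℝ) ^ σ.length) • x + rho r m σ := rfl
  rw [this, affine_image_cchull _ (ne_of_gt (powR_pos hr _))]

lemma GamInv_eq_aff (σ : Word r m) :
    GamInv r m σ = fun y => ((r:ℝ) ^ σ.length)⁻¹ • y + (-(((r:ℝ) ^ σ.length)⁻¹ • rho r m σ)) := by
  funext y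
  simp [GamInv, smul_sub, sub_eq_add_neg]

lemma GamInv_image_cchull (hr : 2 ≤ r) (σ : Word r m) (X : Set (Fin m → ℝ)) :
    GamInv r m σ '' closure (convexHull ℝ X) = closure (convexHull ℝ (GamInv r m σ '' X)) := by
  rw [GamInv_eq_aff, affine_image_cchull _ (inv_ne_zero (ne_of_gt (powR_pos hr _)))]

lemma continuous_GamInv (σ : Word r m) : Continuous (GamInv r m σ) := by
  unfold GamInv; exact ((continuous_id (X := Fin m → ℝ)).sub continuous_const).const_smul ((r:ℝ) ^ σ.length)⁻¹

end C

section D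
variable {α : Type*}

lemma catL_assoc (A B C : Set (List α)) : catL (catL A B) C = catL A (catL B C) := by
  ext w
  constructor
  · rintro ⟨ab, ⟨a, ha, b, hb, rfl⟩, c, hc, rfl⟩
    exact ⟨a, ha, b ++ c, ⟨b, hb, c, hc, rfl⟩, by simp⟩
  · rintro ⟨a, ha, bc, ⟨b, hb, c, hc, rfl⟩, rfl⟩
    exact ⟨a ++ b, ⟨a, ha, b, hb, rfl⟩, c, hc, by simp⟩

lemma catL_singleton_append (τ a : List α) (Y : Set (List α)) :
    catL {τ ++ a} Y = (τ ++ ·) '' catL {a} Y := by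
  ext w
  constructor
  · rintro ⟨x, hx, b, hb, rfl⟩
    rw [Set.mem_singleton_iff] at hx
    subst hx
    exact ⟨a ++ b, ⟨a, rfl, b, hb, rfl⟩, by simp⟩
  · rintro ⟨x, ⟨x', hx', b, hb, rfl⟩, rfl⟩
    rw [Set.mem_singleton_iff] at hx'
    subst hx'
    exact ⟨τ ++ x', rfl, b, hb, by simp⟩

lemma chainLang_congr (σ τ : ℕ → List α) (Ls : ℕ → Set (List α)) (n : ℕ)
    (h : ∀ j, 1 ≤ j → j ≤ n + 1 → σ j = τ j) : chainLang σ Ls n = chainLang τ Ls n := by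
  induction n with
  | zero => simp [chainLang, h 1 le_rfl le_rfl]
  | succ n ih =>
      simp only [chainLang]
      rw [h (n+2) (by omega) (by omega), ih (fun j h1 h2 => h j h1 (by omega))]

lemma chain_snoc (σ : ℕ → List α) (Ls : ℕ → Set (List α)) (n : ℕ) :
    chainLang σ Ls (n + 1) =
      catL (chainLang (fun j => σ (j+1)) (fun j => Ls (j+1)) n)
        (catL (kstar' (Ls 1)) {σ 1}) := by
  induction n generalizing σ Ls with
  | zero => rfl
  | succ n ih =>
      show catL {σ (n+3)} (catL (kstar' (Ls (n+2))) (chainLang σ Ls (n+1))) = _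
      rw [ih]
      show _ = catL (catL {σ (n+3)} (catL (kstar' (Ls (n+2)))
        (chainLang (fun j => σ (j+1)) (fun j => Ls (j+1)) n))) (catL (kstar' (Ls 1)) {σ 1})
      rw [catL_assoc, catL_assoc]

lemma prepend_chain (τ : List α) (σ : ℕ → List α) (Ls : ℕ → Set (List α)) (n : ℕ) :
    chainLang (fun j => if j = n + 1 then τ ++ σ (n+1) else σ j) Ls n =
      (τ ++ ·) '' chainLang σ Ls n := by
  cases n with
  | zero =>
      simp only [chainLang]
      ext w; simp
  | succ n =>
      show catL {if n + 2 = n + 2 then τ ++ σ (n+2) else σ (n+2)} _ = _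
      rw [if_pos rfl]
      have hc : chainLang (fun j => if j = n + 2 then τ ++ σ (n+2) else σ j) Ls n
          = chainLang σ Ls n :=
        chainLang_congr _ _ _ _ (fun j h1 h2 => by simp [Nat.ne_of_lt (by omega : j < n+2)])
      rw [hc, catL_singleton_append]
      rfl

lemma nil_mem_kstar' (L : Set (List α)) : [] ∈ kstar' L :=
  ⟨[], by simp, rfl⟩

lemma repK_mem_kstar' {L : Set (List α)} {u : List α} (hu : u ∈ L) (k : ℕ) :
    repK u k ∈ kstar' L :=
  ⟨List.replicate k u, fun v hv => by rw [List.eq_of_mem_replicate hv]; exact hu, rfl⟩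

lemma catDown_self (σ : ℕ → List α) (k : ℕ) : catDown σ k k = σ k := by
  unfold catDown
  have h1 : k + 1 - k = 1 := by omega
  rw [h1]
  simp [List.range_succ]

lemma catDown_peel_top (σ : ℕ → List α) (hi lo : ℕ) (h : lo ≤ hi + 1) :
    catDown σ (hi + 1) lo = σ (hi + 1) ++ catDown σ hi lo := by
  unfold catDown
  have : hi + 1 + 1 - lo = (hi + 1 - lo) + 1 := by omega
  rw [this, List.range_succ_eq_map]
  simp only [List.map_cons, List.map_map, List.flatten_cons, Nat.sub_zero]
  congr 1
  apply congrArg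
  apply List.map_congr_left
  intro j hj
  have e2 : hi + 1 - (j + 1) = hi - j := by omega
  simp [e2]

lemma catDown_peel_bot (σ : ℕ → List α) (hi lo : ℕ) (h : lo ≤ hi) :
    catDown σ hi lo = catDown σ hi (lo + 1) ++ σ lo := by
  unfold catDown
  have : hi + 1 - lo = (hi + 1 - (lo + 1)) + 1 := by omega
  rw [this, List.range_succ]
  simp only [List.map_append, List.map_cons, List.map_nil, List.flatten_append]
  have h2 : hi - (hi + 1 - (lo + 1)) = lo := by omega
  have h3 : hi - (hi - lo) = lo := by omega
  simp [h2, h3]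

lemma catDown_congr (σ τ : ℕ → List α) (hi lo : ℕ)
    (h : ∀ j, lo ≤ j → j ≤ hi → σ j = τ j) : catDown σ hi lo = catDown τ hi lo := by
  unfold catDown
  congr 1
  apply List.map_congr_left
  intro j hj
  rw [List.mem_range] at hj
  exact h _ (by omega) (by omega)

lemma catDown_shift (σ : ℕ → List α) (hi lo : ℕ) (h : lo ≤ hi + 1) :
    catDown (fun j => σ (j + 1)) hi lo = catDown σ (hi + 1) (lo + 1) := by
  unfold catDown
  have e : hi + 1 - lo = hi + 1 + 1 - (lo + 1) := by omega
  rw [← e]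
  apply congrArg
  apply List.map_congr_left
  intro j hj
  rw [List.mem_range] at hj
  have e2 : hi - j + 1 = hi + 1 - j := by omega
  simp [e2]

lemma catDown_mem_chain (σ : ℕ → List α) (Ls : ℕ → Set (List α)) (n : ℕ) :
    catDown σ (n + 1) 1 ∈ chainLang σ Ls n := by
  induction n with
  | zero => simp [chainLang, catDown_self]
  | succ n ih =>
      rw [catDown_peel_top σ (n+1) 1 (by omega)]
      exact ⟨σ (n+2), rfl, catDown σ (n+1) 1, ⟨[], nil_mem_kstar' _, catDown σ (n+1) 1, ih, rfl⟩, rfl⟩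

lemma chain_snoc_mem {σ : ℕ → List α} {Ls : ℕ → Set (List α)} {n : ℕ} {w' v : List α}
    (hw : w' ∈ chainLang (fun j => σ (j+1)) (fun j => Ls (j+1)) n) (hv : v ∈ kstar' (Ls 1)) :
    w' ++ (v ++ σ 1) ∈ chainLang σ Ls (n + 1) := by
  rw [chain_snoc]
  exact ⟨w', hw, v ++ σ 1, ⟨v, hv, σ 1, rfl, rfl⟩, rfl⟩

end D

section E
variable {r m : ℕ}
open Filter Topology

lemma subset_cchull (A : Set (Fin m → ℝ)) : A ⊆ closure (convexHull ℝ A) :=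
  (subset_convexHull ℝ A).trans subset_closure

lemma convex_cchull (A : Set (Fin m → ℝ)) : Convex ℝ (closure (convexHull ℝ A)) :=
  (convex_convexHull ℝ A).closure

lemma cchull_mono {A B : Set (Fin m → ℝ)} (h : A ⊆ B) :
    closure (convexHull ℝ A) ⊆ closure (convexHull ℝ B) :=
  closure_mono (convexHull_mono h)

lemma cchull_min {A B : Set (Fin m → ℝ)} (h : A ⊆ closure (convexHull ℝ B)) :
    closure (convexHull ℝ A) ⊆ closure (convexHull ℝ B) :=
  closure_minimal (convexHull_min h (convex_cchull B)) isClosed_closure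

lemma Gam_image_convex (σ : Word r m) {C : Set (Fin m → ℝ)} (hC : Convex ℝ C) :
    Convex ℝ (Gam r m σ '' C) := by
  have e2 : ⇑(affMap ((r:ℝ) ^ σ.length) (rho r m σ) (m := m)) = Gam r m σ := rfl
  rw [← e2]
  exact hC.affine_image _

lemma Gam_preimage_append (a b : Word r m) (X : Set (Fin m → ℝ)) :
    Gam r m (a ++ b) ⁻¹' X = Gam r m b ⁻¹' (Gam r m a ⁻¹' X) := by
  ext x
  simp [Set.mem_preimage, Gam_append]

lemma xi_flatten_mem (hr : 2 ≤ r) {C : Set (Fin m → ℝ)} (hC : Convex ℝ C)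
    (ws : List (Word r m)) (hmem : ∀ u ∈ ws, u ≠ [] → xi r m u ∈ C)
    (hne : ws.flatten ≠ []) : xi r m ws.flatten ∈ C := by
  induction ws with
  | nil => simp at hne
  | cons u t iht =>
      rw [List.flatten_cons] at hne ⊢
      by_cases hu : u = []
      · subst hu
        rw [List.nil_append] at hne ⊢
        exact iht (fun v hv => hmem v (List.mem_cons_of_mem _ hv)) hne
      · by_cases ht : t.flatten = []
        · rw [ht, List.append_nil]
          exact hmem u List.mem_cons_self hu
        · exact xi_append_mem_convex hr hC hu ht (hmem u List.mem_cons_self hu)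
            (iht (fun v hv => hmem v (List.mem_cons_of_mem _ hv)) ht)

lemma xi_kstar_mem (hr : 2 ≤ r) {K : Set (Word r m)} {v : Word r m}
    (hv : v ∈ kstar' K) (hne : v ≠ []) :
    xi r m v ∈ closure (convexHull ℝ (xiSet r m K)) := by
  obtain ⟨ws, hws, rfl⟩ := hv
  exact xi_flatten_mem hr (convex_cchull _) ws
    (fun u hu hune => subset_cchull _ ⟨u, hws u hu, hune, rfl⟩) hne

lemma append_ne_nil_comm {a b : Word r m} (h : a ++ b ≠ []) : b ++ a ≠ [] := by
  simp only [ne_eq, List.append_eq_nil_iff] at *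
  tauto

end E

section Master
variable {r m : ℕ}
open Filter Topology

lemma master (hr : 2 ≤ r) :
    ∀ (n : ℕ) (σ : ℕ → Word r m) (Ls : ℕ → Set (Word r m)),
    closure (convexHull ℝ (xiSet r m (chainLang σ Ls n))) =
      closure (convexHull ℝ
        (xiSet r m {catDown σ (n + 1) 1} ∪
          ⋃ i ∈ Finset.Icc 1 n,
            Gam r m (catDown σ i 1) ⁻¹'
              closure (convexHull ℝ (xiSet r m (Ls i))))) := by
  intro n
  induction n with
  | zero =>
      intro σ Ls
      have h0 : Finset.Icc 1 0 = (∅ : Finset ℕ) := Finset.Icc_eq_empty (by omega)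
      rw [h0]
      simp only [Finset.notMem_empty, Set.iUnion_of_empty, Set.iUnion_empty, Set.union_empty,
        catDown_self]
      rfl
  | succ n ih =>
      intro σ Ls
      -- abbreviations (written out; σ' is the prepended shifted system)
      -- key catDown computations
      have hsplit : catDown σ (n + 2) 1 = catDown σ (n + 2) 2 ++ σ 1 :=
        catDown_peel_bot σ (n + 2) 1 (by omega)
      have hqshift : catDown (fun j => σ (j + 1)) (n + 1) 1 = catDown σ (n + 2) 2 :=
        catDown_shift σ (n + 1) 1 (by omega)
      have hq_chain : catDown σ (n + 2) 2 ∈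
          chainLang (fun j => σ (j + 1)) (fun j => Ls (j + 1)) n := by
        rw [← hqshift]; exact catDown_mem_chain _ _ n
      have hchain' : chainLang (fun j => if j = n + 1 then σ 1 ++ σ (n + 2) else σ (j + 1))
            (fun j => Ls (j + 1)) n
          = (σ 1 ++ ·) '' chainLang (fun j => σ (j + 1)) (fun j => Ls (j + 1)) n :=
        prepend_chain (σ 1) (fun j => σ (j + 1)) (fun j => Ls (j + 1)) n
      have IH' := ih (fun j => if j = n + 1 then σ 1 ++ σ (n + 2) else σ (j + 1))
        (fun j => Ls (j + 1))
      have hc0 : catDown (fun j => if j = n + 1 then σ 1 ++ σ (n + 2) else σ (j + 1)) n 1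
          = catDown σ (n + 1) 2 := by
        rw [catDown_congr (fun j => if j = n + 1 then σ 1 ++ σ (n + 2) else σ (j + 1))
          (fun j => σ (j + 1)) n 1 (fun j h1 h2 => by
            simp [show j ≠ n + 1 by omega])]
        exact catDown_shift σ n 1 (by omega)
      have hc1 : catDown (fun j => if j = n + 1 then σ 1 ++ σ (n + 2) else σ (j + 1)) (n + 1) 1
          = σ 1 ++ catDown σ (n + 2) 2 := by
        rw [catDown_peel_top _ n 1 (by omega), hc0, catDown_peel_top σ (n + 1) 2 (by omega)]
        simp
      have hc2 : ∀ j, 1 ≤ j → j ≤ n →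
          catDown (fun j => if j = n + 1 then σ 1 ++ σ (n + 2) else σ (j + 1)) j 1
            = catDown σ (j + 1) 2 := by
        intro j h1 h2
        rw [catDown_congr (fun i => if i = n + 1 then σ 1 ++ σ (n + 2) else σ (i + 1))
          (fun i => σ (i + 1)) j 1 (fun i hi1 hi2 => by
            simp [show i ≠ n + 1 by omega])]
        exact catDown_shift σ j 1 (by omega)
      have hc4 : ∀ j, catDown σ (j + 1) 1 = catDown σ (j + 1) 2 ++ σ 1 :=
        fun j => catDown_peel_bot σ (j + 1) 1 (by omega)
      have hc5 : catDown σ 1 1 = σ 1 := catDown_self σ 1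
      -- the target generator set S and its hull T
      set S : Set (Fin m → ℝ) := xiSet r m {catDown σ (n + 1 + 1) 1} ∪
          ⋃ i ∈ Finset.Icc 1 (n + 1),
            Gam r m (catDown σ i 1) ⁻¹'
              closure (convexHull ℝ (xiSet r m (Ls i))) with hS
      -- the source generators
      set Sl : Set (Fin m → ℝ) := xiSet r m (chainLang σ Ls (n + 1)) with hSl
      -- the shifted generator set S'
      set S' : Set (Fin m → ℝ) :=
          xiSet r m {catDown (fun j => if j = n + 1 then σ 1 ++ σ (n + 2) else σ (j + 1)) (n + 1) 1} ∪
          ⋃ i ∈ Finset.Icc 1 n,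
            Gam r m (catDown (fun j => if j = n + 1 then σ 1 ++ σ (n + 2) else σ (j + 1)) i 1) ⁻¹'
              closure (convexHull ℝ (xiSet r m (Ls (i + 1)))) with hS'
      -- (★) pushing the shifted generators down
      have hstar : ∀ y ∈ S', GamInv r m (σ 1) y ∈ S := by
        intro y hy
        rcases hy with hy | hy
        · obtain ⟨w, hw, hwne, rfl⟩ := hy
          rw [Set.mem_singleton_iff] at hw
          subst hw
          left
          rw [hc1] at hwne ⊢
          rw [← xi_append_eq_gaminv hr (catDown σ (n + 2) 2) (σ 1), ← hsplit]
          exact ⟨catDown σ (n + 2) 1, rfl, by rw [hsplit]; exact append_ne_nil_comm hwne, rfl⟩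
        · rw [Set.mem_iUnion₂] at hy
          obtain ⟨i, hi, hy⟩ := hy
          rw [Finset.mem_Icc] at hi
          right
          rw [Set.mem_iUnion₂]
          refine ⟨i + 1, Finset.mem_Icc.mpr (by omega), ?_⟩
          rw [hc2 i hi.1 hi.2] at hy
          rw [hc4 i, Gam_preimage_append, Set.mem_preimage, Gam_GamInv hr]
          exact hy
      -- (★★) consequence at the hull level
      have hstar2 : GamInv r m (σ 1) '' closure (convexHull ℝ S') ⊆ closure (convexHull ℝ S) := by
        rw [GamInv_image_cchull hr]
        apply cchull_min
        rintro t ⟨y, hy, rfl⟩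
        exact subset_cchull S (hstar y hy)
      -- (★3)
      have hstar3 : GamInv r m (σ 1) ''
          closure (convexHull ℝ (xiSet r m (chainLang
            (fun j => if j = n + 1 then σ 1 ++ σ (n + 2) else σ (j + 1))
            (fun j => Ls (j + 1)) n))) ⊆ closure (convexHull ℝ S) := by
        rw [IH']
        exact hstar2
      -- main equality
      apply subset_antisymm
      · -- ⊆ : each ξ(w) is in the hull of S
        apply cchull_min
        rintro x ⟨w, hw, hwne, rfl⟩
        rw [chain_snoc] at hw
        obtain ⟨w', hw', z, ⟨v, hv, s1, hs1, rfl⟩, rfl⟩ := hw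
        rw [Set.mem_singleton_iff] at hs1
        subst hs1
        have hrot : xi r m (w' ++ (v ++ σ 1)) =
            GamInv r m (σ 1) (xi r m (σ 1 ++ (w' ++ v))) := by
          rw [← List.append_assoc]
          exact xi_append_eq_gaminv hr (w' ++ v) (σ 1)
        by_cases hvnil : v = []
        · -- no middle part : use the shifted chain directly
          subst hvnil
          have hz1 : σ 1 ++ w' ∈ chainLang
              (fun j => if j = n + 1 then σ 1 ++ σ (n + 2) else σ (j + 1))
              (fun j => Ls (j + 1)) n := by
            rw [hchain']; exact ⟨w', hw', rfl⟩
          have hz1ne : σ 1 ++ w' ≠ [] := by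
            apply append_ne_nil_comm
            simpa using hwne
          have : xi r m (w' ++ ([] ++ σ 1)) ∈
              GamInv r m (σ 1) '' closure (convexHull ℝ (xiSet r m (chainLang
                (fun j => if j = n + 1 then σ 1 ++ σ (n + 2) else σ (j + 1))
                (fun j => Ls (j + 1)) n))) := by
            refine ⟨xi r m (σ 1 ++ w'), subset_cchull _ ⟨σ 1 ++ w', hz1, hz1ne, rfl⟩, ?_⟩
            rw [hrot]
            simp
          exact hstar3 this
        · by_cases hz1nil : σ 1 ++ w' = []
          · -- whole prefix empty : w = v
            have hσ1 : σ 1 = [] := (List.append_eq_nil_iff.mp hz1nil).1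
            have hw'nil : w' = [] := (List.append_eq_nil_iff.mp hz1nil).2
            have hxv : xi r m v ∈ closure (convexHull ℝ (xiSet r m (Ls 1))) :=
              xi_kstar_mem hr hv hvnil
            apply subset_cchull
            right
            rw [Set.mem_iUnion₂]
            refine ⟨1, Finset.mem_Icc.mpr (by omega), ?_⟩
            rw [Set.mem_preimage, hc5, hσ1]
            subst hw'nil
            simpa [Gam_nil] using hxv
          · -- main case : two-block convex combination inside Γ_{σ1}(T)
            have hz1 : σ 1 ++ w' ∈ chainLang
                (fun j => if j = n + 1 then σ 1 ++ σ (n + 2) else σ (j + 1))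
                (fun j => Ls (j + 1)) n := by
              rw [hchain']; exact ⟨w', hw', rfl⟩
            have hxv : xi r m v ∈ closure (convexHull ℝ (xiSet r m (Ls 1))) :=
              xi_kstar_mem hr hv hvnil
            have hC0 : Convex ℝ (Gam r m (σ 1) '' closure (convexHull ℝ S)) :=
              Gam_image_convex (σ 1) (convex_cchull S)
            have hmem1 : xi r m (σ 1 ++ w') ∈ Gam r m (σ 1) '' closure (convexHull ℝ S) := by
              refine ⟨GamInv r m (σ 1) (xi r m (σ 1 ++ w')), ?_, Gam_GamInv hr _ _⟩
              exact hstar3 ⟨xi r m (σ 1 ++ w'), subset_cchull _ ⟨σ 1 ++ w', hz1, hz1nil, rfl⟩, rfl⟩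
            have hK1 : GamInv r m (σ 1) '' closure (convexHull ℝ (xiSet r m (Ls 1))) ⊆
                closure (convexHull ℝ S) := by
              intro t ht
              rw [← Gam_preimage_eq hr] at ht
              apply subset_cchull
              right
              rw [Set.mem_iUnion₂]
              exact ⟨1, Finset.mem_Icc.mpr (by omega), by rwa [hc5]⟩
            have hmem2 : xi r m v ∈ Gam r m (σ 1) '' closure (convexHull ℝ S) := by
              refine ⟨GamInv r m (σ 1) (xi r m v), hK1 ⟨xi r m v, hxv, rfl⟩, Gam_GamInv hr _ _⟩
            have hcomb : xi r m ((σ 1 ++ w') ++ v) ∈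
                Gam r m (σ 1) '' closure (convexHull ℝ S) :=
              xi_append_mem_convex hr hC0 hz1nil hvnil hmem1 hmem2
            obtain ⟨t, htT, hteq⟩ := hcomb
            have heqt : xi r m (w' ++ (v ++ σ 1)) = t := by
              rw [hrot,
                show σ 1 ++ (w' ++ v) = σ 1 ++ w' ++ v from (List.append_assoc _ _ _).symm,
                ← hteq, GamInv_Gam hr]
            rw [heqt]
            exact htT
      · -- ⊇ : each generator of S is in the hull of ξ(L)
        apply cchull_min
        intro y hy
        rcases hy with hy | hy
        · obtain ⟨w, hw, hwne, rfl⟩ := hy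
          rw [Set.mem_singleton_iff] at hw
          subst hw
          exact subset_cchull _ ⟨catDown σ (n + 1 + 1) 1, catDown_mem_chain σ Ls (n + 1), hwne, rfl⟩
        · rw [Set.mem_iUnion₂] at hy
          obtain ⟨i, hi, hy⟩ := hy
          rw [Finset.mem_Icc] at hi
          rcases Nat.lt_or_ge i 2 with hilt | hige
          · -- i = 1 : limit argument
            have hi1 : i = 1 := by omega
            subst hi1
            rw [hc5, Gam_preimage_eq hr, GamInv_image_cchull hr] at hy
            revert y
            apply cchull_min
            rintro t ⟨x0, hx0, rfl⟩
            obtain ⟨u, hu, hune, rfl⟩ := hx0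
            -- GamInv σ1 (xi u) is a limit of ξ of words of the chain
            have hwordmem : ∀ k : ℕ, catDown σ (n + 2) 2 ++ (repK u (k + 1) ++ σ 1) ∈
                chainLang σ Ls (n + 1) :=
              fun k => chain_snoc_mem hq_chain (repK_mem_kstar' hu (k + 1))
            have hwordne : ∀ k : ℕ, catDown σ (n + 2) 2 ++ (repK u (k + 1) ++ σ 1) ≠ [] := by
              intro k h
              rw [List.append_eq_nil_iff] at h
              rw [List.append_eq_nil_iff] at h
              exact repK_ne_nil hune k h.2.1
            have hlim : Tendsto (fun k => xi r m (catDown σ (n + 2) 2 ++ (repK u (k + 1) ++ σ 1)))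
                atTop (nhds (GamInv r m (σ 1) (xi r m u))) := by
              have h1 : Tendsto (fun k => xi r m ((σ 1 ++ catDown σ (n + 2) 2) ++ repK u (k + 1)))
                  atTop (nhds (xi r m u)) := xi_tendsto hr hune _
              have h2 := ((continuous_GamInv (σ := σ 1) (r := r) (m := m)).tendsto _).comp h1
              refine h2.congr (fun k => ?_)
              show GamInv r m (σ 1) (xi r m ((σ 1 ++ catDown σ (n + 2) 2) ++ repK u (k + 1))) = _
              rw [List.append_assoc]
              rw [← xi_append_eq_gaminv hr (catDown σ (n + 2) 2 ++ repK u (k + 1)) (σ 1)]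
              rw [List.append_assoc]
            have : GamInv r m (σ 1) (xi r m u) ∈ closure Sl :=
              mem_closure_of_tendsto hlim (Filter.Eventually.of_forall (fun k =>
                ⟨_, hwordmem k, hwordne k, rfl⟩))
            exact (closure_mono (subset_convexHull ℝ Sl)) this
          · -- i ≥ 2 : through the shifted chain
            obtain ⟨j, rfl⟩ : ∃ j, i = j + 1 := ⟨i - 1, by omega⟩
            rw [hc4 j, Gam_preimage_append] at hy
            rw [← hc2 j (by omega) (by omega)] at hy
            rw [Gam_preimage_eq hr] at hy
            have hyS' : y ∈ GamInv r m (σ 1) '' closure (convexHull ℝ S') := by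
              obtain ⟨x0, hx0, rfl⟩ := hy
              refine ⟨x0, ?_, rfl⟩
              apply subset_cchull
              right
              rw [Set.mem_iUnion₂]
              exact ⟨j, Finset.mem_Icc.mpr (by omega), hx0⟩
            rw [← IH'] at hyS'
            -- now push it back into the original chain
            rw [GamInv_image_cchull hr] at hyS'
            have hpush : GamInv r m (σ 1) '' xiSet r m (chainLang
                (fun j => if j = n + 1 then σ 1 ++ σ (n + 2) else σ (j + 1))
                (fun j => Ls (j + 1)) n) ⊆ closure (convexHull ℝ Sl) := by
              rintro t ⟨x0, hx0, rfl⟩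
              obtain ⟨z, hz, hzne, rfl⟩ := hx0
              rw [hchain'] at hz
              obtain ⟨w', hw', rfl⟩ := hz
              have heq2 : GamInv r m (σ 1) (xi r m (σ 1 ++ w')) = xi r m (w' ++ σ 1) :=
                (xi_append_eq_gaminv hr w' (σ 1)).symm
              rw [heq2]
              apply subset_cchull
              refine ⟨w' ++ σ 1, ?_, append_ne_nil_comm hzne, rfl⟩
              have hm2 := chain_snoc_mem (σ := σ) (Ls := Ls) hw' (nil_mem_kstar' (Ls 1))
              simpa using hm2
            exact cchull_min hpush hyS'
end Master

/-- Proposition 3 of the paper. -/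
theorem closure_convexHull_xiSet_chainLang
    (r m : ℕ) (hr : 2 ≤ r) (hm : 1 ≤ m) (n : ℕ)
    (σ : ℕ → Word r m) (Ls : ℕ → Set (Word r m)) :
    closure (convexHull ℝ (xiSet r m (chainLang σ Ls n))) =
      closure (convexHull ℝ
        (xiSet r m {catDown σ (n + 1) 1} ∪
          ⋃ i ∈ Finset.Icc 1 n,
            Gam r m (catDown σ i 1) ⁻¹'
              closure (convexHull ℝ (xiSet r m (Ls i))))) := by
  exact master hr n σ Ls
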